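/- Let A be an associative unital algebra over k = ℚ(q) containing elements E, F, K₊, K₋ satisfying the U_q(s̃l₂) relations, set C := FE − qK₊ − q⁻¹K₋, and for t ≥ 0 set X_t := Σ_{s=0}^{t} (−1)^s q^s · binom[q²]{t}{s} · K₊^s F^{t−s} E^{t−s}. Then for every integer t ≥ 1: X_t · C = X_{t+1} − q^{−2t−1} K₋ X_t + (1 − q^{−2t}) K₋K₊ X_{t−1}. -/

import Mathlib

noncomputable section

/-- The Gaussian binomial coefficient `binom[v]{a}{n} = ∏_{t=1}^{n} (v^{a-n+t} - 1)/(v^t - 1)`,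
evaluated at `v ∈ ℚ(q)`. -/
def gbinom (v : RatFunc ℚ) (a n : ℕ) : RatFunc ℚ :=
  ∏ t ∈ Finset.range n, (v ^ (a - n + t + 1) - 1) / (v ^ (t + 1) - 1)

namespace S9aux

def alf (q : RatFunc ℚ) (t s : ℕ) : RatFunc ℚ := (-1)^s * q^s * gbinom (q^2) t s

lemma gbinom_eq_div (v : RatFunc ℚ) (a n : ℕ) :
    gbinom v a n = (∏ i ∈ Finset.range n, (v ^ (a - n + i + 1) - 1)) /
      (∏ i ∈ Finset.range n, (v ^ (i + 1) - 1)) := by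
  rw [gbinom, Finset.prod_div_distrib]

lemma gbinom_zero (v : RatFunc ℚ) (a : ℕ) : gbinom v a 0 = 1 := by
  simp [gbinom]

lemma gbinom_self (v : RatFunc ℚ) (hv : ∀ k : ℕ, k ≠ 0 → v ^ k - 1 ≠ 0) (n : ℕ) :
    gbinom v n n = 1 := by
  rw [gbinom]
  apply Finset.prod_eq_one
  intro i _
  simp only [Nat.sub_self, Nat.zero_add]
  exact div_self (hv (i+1) (by omega))

-- identity A

lemma gbinom_absorb (v : RatFunc ℚ) (hv : ∀ k : ℕ, k ≠ 0 → v ^ k - 1 ≠ 0)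
    (u s : ℕ) (hs : s ≤ u) :
    (v ^ (s+1) - 1) * gbinom v (u+1) (s+1) = (v ^ (u+1) - 1) * gbinom v u s := by
  rw [gbinom_eq_div, gbinom_eq_div]
  rw [Finset.prod_range_succ, Finset.prod_range_succ (f := fun i => v ^ (i+1) - 1)]
  have e1 : ∀ i, (u+1) - (s+1) + i + 1 = u - s + i + 1 := by intro i; omega
  have e2 : (u+1) - (s+1) + s + 1 = u + 1 := by omega
  simp only [e1, e2]
  have hden : (∏ i ∈ Finset.range s, (v ^ (i+1) - 1)) ≠ 0 :=
    Finset.prod_ne_zero_iff.2 fun i _ => hv (i+1) (by omega)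
  have hs1 : v ^ (s+1) - 1 ≠ 0 := hv (s+1) (by omega)
  field_simp
  obtain ⟨d, rfl⟩ : ∃ d, u = s + d := ⟨u - s, by omega⟩
  simp only [Nat.add_sub_cancel_left]
  ring

-- identity C

lemma gbinom_absorb' (v : RatFunc ℚ) (hv : ∀ k : ℕ, k ≠ 0 → v ^ k - 1 ≠ 0)
    (t s : ℕ) (hs : s + 1 ≤ t) :
    (v ^ (s+1) - 1) * gbinom v t (s+1) = (v ^ (t-s) - 1) * gbinom v t s := by
  rw [gbinom_eq_div, gbinom_eq_div]
  rw [Finset.prod_range_succ' (f := fun i => v ^ (t - (s+1) + i + 1) - 1),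
      Finset.prod_range_succ (f := fun i => v ^ (i+1) - 1)]
  have e1 : ∀ i, t - (s+1) + (i+1) + 1 = t - s + i + 1 := by intro i; omega
  have e2 : t - (s+1) + 0 + 1 = t - s := by omega
  simp only [e1, e2]
  have hden : (∏ i ∈ Finset.range s, (v ^ (i+1) - 1)) ≠ 0 :=
    Finset.prod_ne_zero_iff.2 fun i _ => hv (i+1) (by omega)
  have hs1 : v ^ (s+1) - 1 ≠ 0 := hv (s+1) (by omega)
  field_simp

lemma gbinom_pascal (v : RatFunc ℚ) (hv : ∀ k : ℕ, k ≠ 0 → v ^ k - 1 ≠ 0)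
    (u s : ℕ) (hs : s ≤ u) :
    gbinom v (u+2) (s+1) = gbinom v (u+1) (s+1) + v ^ (u+1-s) * gbinom v (u+1) s := by
  have hs1 : v ^ (s+1) - 1 ≠ 0 := hv (s+1) (by omega)
  apply mul_left_cancel₀ hs1
  rw [gbinom_absorb v hv (u+1) s (by omega)]
  rw [mul_add, mul_left_comm, gbinom_absorb' v hv (u+1) s (by omega)]
  have e3 : u + 1 - s + (s + 1) = u + 2 := by omega
  have : v ^ (u+1-s) * v ^ (s+1) = v ^ (u+2) := by rw [← pow_add, e3]
  linear_combination -gbinom v (u+1) s * this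


lemma alf_pascal (q : RatFunc ℚ) (hv : ∀ k : ℕ, k ≠ 0 → (q^2) ^ k - 1 ≠ 0)
    (u s : ℕ) (hs : s ≤ u) :
    alf q (u+2) (s+1) = alf q (u+1) (s+1) - q^(2*(u+1-s)+1) * alf q (u+1) s := by
  unfold alf
  rw [gbinom_pascal (q^2) hv u s hs]
  have h : q^(2*(u+1-s)+1) = (q^2)^(u+1-s) * q := by
    rw [pow_succ, pow_mul]
  rw [h]; ring

lemma alf_diag (q : RatFunc ℚ) (hv : ∀ k : ℕ, k ≠ 0 → (q^2) ^ k - 1 ≠ 0) (u : ℕ) :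
    alf q (u+2) (u+2) = -(alf q (u+1) (u+1) * q) := by
  unfold alf
  rw [gbinom_self (q^2) hv, gbinom_self (q^2) hv]
  ring

lemma alf_absorb (q : RatFunc ℚ) (hq0 : q ≠ 0)
    (hv : ∀ k : ℕ, k ≠ 0 → (q^2) ^ k - 1 ≠ 0)
    (u s : ℕ) (hs : s ≤ u) :
    alf q (u+1) (s+1) * (q⁻¹)^(2*(u-s)+1) =
      (q⁻¹)^(2*(u+1)+1) * alf q (u+1) (s+1) - (1 - (q⁻¹)^(2*(u+1))) * alf q u s := by
  obtain ⟨d, rfl⟩ : ∃ d, u = s + d := ⟨u - s, by omega⟩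
  have hA := gbinom_absorb (q^2) hv (s+d) s (by omega)
  have hd : s + d - s = d := by omega
  unfold alf
  rw [hd, inv_pow, inv_pow, inv_pow]
  field_simp
  ring_nf
  ring_nf at hA
  linear_combination (-((-1 : RatFunc ℚ)^s * q^(3*s+4*d+4))) * hA

lemma Sp (q : RatFunc ℚ) (hq0 : q ≠ 0) (n : ℕ) :
    q^2 * ((q⁻¹ - q) * ∑ j ∈ Finset.range (n+1), q ^ (2*j)) - q = -q^(2*(n+1)+1) := by
  induction n with
  | zero =>
    simp only [zero_add, Finset.sum_range_one, mul_zero, pow_zero, mul_one]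
    field_simp
    ring
  | succ n ih =>
    rw [Finset.sum_range_succ]
    field_simp at ih ⊢
    linear_combination ih

lemma Sm (q : RatFunc ℚ) (hq0 : q ≠ 0) (n : ℕ) :
    -(q⁻¹^2 * ((q⁻¹ - q) * ∑ j ∈ Finset.range (n+1), q⁻¹ ^ (2*j))) - q⁻¹ = -q⁻¹^(2*(n+1)+1) := by
  have h := Sp q⁻¹ (inv_ne_zero hq0) n
  rw [inv_inv] at h
  linear_combination h

section alg
variable {A : Type*} [Ring A] [Algebra (RatFunc ℚ) A]
variable (q : RatFunc ℚ) (E F Kp Km : A)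

lemma pow_swap (c : RatFunc ℚ) (K Y : A) (hc : K * Y = c • (Y * K)) (n : ℕ) :
    K * Y ^ n = (c ^ n) • (Y ^ n * K) := by
  induction n with
  | zero => simp
  | succ n ih =>
    rw [pow_succ, ← mul_assoc, ih, smul_mul_assoc, mul_assoc, hc, mul_smul_comm,
      smul_smul, ← pow_succ, ← mul_assoc, ← pow_succ]

lemma k_comm_Y (hq0 : q ≠ 0) (K : A)
    (hKE : K * E = (q ^ 2) • (E * K)) (hKF : K * F = (q⁻¹ ^ 2) • (F * K)) (n : ℕ) :
    K * (F ^ n * E ^ n) = (F ^ n * E ^ n) * K := by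
  rw [← mul_assoc, pow_swap (q⁻¹^2) K F hKF, smul_mul_assoc, mul_assoc,
    pow_swap (q^2) K E hKE, mul_smul_comm, smul_smul]
  have h1 : (q⁻¹^2)^n * (q^2)^n = 1 := by
    rw [← mul_pow, ← mul_pow, inv_mul_cancel₀ hq0, one_pow, one_pow]
  rw [h1, one_smul, mul_assoc]

lemma k_comm_Y' (hq0 : q ≠ 0) (K : A)
    (hKE : K * E = (q⁻¹ ^ 2) • (E * K)) (hKF : K * F = (q ^ 2) • (F * K)) (n : ℕ) :
    K * (F ^ n * E ^ n) = (F ^ n * E ^ n) * K := by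
  rw [← mul_assoc, pow_swap (q^2) K F hKF, smul_mul_assoc, mul_assoc,
    pow_swap (q⁻¹^2) K E hKE, mul_smul_comm, smul_smul]
  have h1 : (q^2)^n * (q⁻¹^2)^n = 1 := by
    rw [← mul_pow, ← mul_pow, mul_inv_cancel₀ hq0, one_pow, one_pow]
  rw [h1, one_smul, mul_assoc]

lemma EnF
    (hKpE : Kp * E = (q ^ 2) • (E * Kp))
    (hKmE : Km * E = (q⁻¹ ^ 2) • (E * Km))
    (hEF : E * F - F * E = (q⁻¹ - q) • (Kp - Km)) (n : ℕ) :
    E ^ (n+1) * F = F * E ^ (n+1)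
      + ((q⁻¹ - q) * ∑ j ∈ Finset.range (n+1), q ^ (2*j)) • (E ^ n * Kp)
      - ((q⁻¹ - q) * ∑ j ∈ Finset.range (n+1), q⁻¹ ^ (2*j)) • (E ^ n * Km) := by
  have hEFe : E * F = F * E + (q⁻¹ - q) • (Kp - Km) := by rw [← hEF]; abel
  induction n with
  | zero =>
    simp only [zero_add, pow_one, pow_zero, one_mul, Finset.range_one,
      Finset.sum_singleton, mul_zero, mul_one]
    rw [hEFe, smul_sub]
    abel
  | succ n ih =>
    have step1 : E ^ (n+2) * F = E * (E ^ (n+1) * F) := by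
      rw [← mul_assoc, ← pow_succ']
    rw [step1, ih, mul_sub, mul_add, mul_smul_comm, mul_smul_comm]
    have step3 : E * (E ^ n * Kp) = E ^ (n+1) * Kp := by
      rw [← mul_assoc, ← pow_succ']
    have step3' : E * (E ^ n * Km) = E ^ (n+1) * Km := by
      rw [← mul_assoc, ← pow_succ']
    have hKpEn : Kp * E ^ (n+1) = (q ^ (2*(n+1))) • (E ^ (n+1) * Kp) := by
      rw [pow_swap (q^2) Kp E hKpE, ← pow_mul]
    have hKmEn : Km * E ^ (n+1) = (q⁻¹ ^ (2*(n+1))) • (E ^ (n+1) * Km) := by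
      rw [pow_swap (q⁻¹^2) Km E hKmE, ← pow_mul]
    have step4 : E * (F * E ^ (n+1)) = F * E ^ (n+2)
        + ((q⁻¹ - q) * q ^ (2*(n+1))) • (E ^ (n+1) * Kp)
        - ((q⁻¹ - q) * q⁻¹ ^ (2*(n+1))) • (E ^ (n+1) * Km) := by
      rw [← mul_assoc, hEFe, add_mul, smul_mul_assoc, sub_mul, hKpEn, hKmEn,
        mul_assoc, ← pow_succ', smul_sub, smul_smul, smul_smul]
      abel
    rw [step3, step3', step4]
    conv_rhs => rw [Finset.sum_range_succ (f := fun j => q ^ (2*j)),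
      Finset.sum_range_succ (f := fun j => q⁻¹ ^ (2*j))]
    rw [mul_add (q⁻¹ - q), add_smul, mul_add (q⁻¹ - q), add_smul]
    abel

lemma YC (hq0 : q ≠ 0)
    (hKpE : Kp * E = (q ^ 2) • (E * Kp))
    (hKmE : Km * E = (q⁻¹ ^ 2) • (E * Km))
    (hKpF : Kp * F = (q⁻¹ ^ 2) • (F * Kp))
    (hKmF : Km * F = (q ^ 2) • (F * Km))
    (hEF : E * F - F * E = (q⁻¹ - q) • (Kp - Km)) (n : ℕ) :
    (F ^ n * E ^ n) * (F * E - q • Kp - q⁻¹ • Km) =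
      F ^ (n+1) * E ^ (n+1) - (q ^ (2*n+1)) • (Kp * (F ^ n * E ^ n))
        - (q⁻¹ ^ (2*n+1)) • (Km * (F ^ n * E ^ n)) := by
  cases n with
  | zero =>
    simp only [pow_zero, one_mul, mul_one, pow_one, mul_zero, zero_add]
  | succ n =>
    have hYKp : Kp * (F^(n+1) * E^(n+1)) = (F^(n+1) * E^(n+1)) * Kp :=
      k_comm_Y q E F hq0 Kp hKpE hKpF (n+1)
    have hYKm : Km * (F^(n+1) * E^(n+1)) = (F^(n+1) * E^(n+1)) * Km :=
      k_comm_Y' q E F hq0 Km hKmE hKmF (n+1)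
    set a := (q⁻¹ - q) * ∑ j ∈ Finset.range (n+1), q ^ (2*j) with ha
    set b := (q⁻¹ - q) * ∑ j ∈ Finset.range (n+1), q⁻¹ ^ (2*j) with hb
    have t1 : (F^(n+1) * (F * E^(n+1))) * E = F^(n+2) * E^(n+2) := by
      rw [← mul_assoc (F^(n+1)) F, ← pow_succ, mul_assoc, ← pow_succ]
    have t2 : (F^(n+1) * (E^n * Kp)) * E = q^2 • (Kp * (F^(n+1) * E^(n+1))) := by
      rw [mul_assoc, mul_assoc, hKpE, mul_smul_comm, mul_smul_comm,
        ← mul_assoc (E^n) E Kp, ← pow_succ, hYKp, ← mul_assoc]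
    have t3 : (F^(n+1) * (E^n * Km)) * E = q⁻¹^2 • (Km * (F^(n+1) * E^(n+1))) := by
      rw [mul_assoc, mul_assoc, hKmE, mul_smul_comm, mul_smul_comm,
        ← mul_assoc (E^n) E Km, ← pow_succ, hYKm, ← mul_assoc]
    have e1 : (F^(n+1) * E^(n+1)) * (F * E) = (F^(n+1) * (E^(n+1) * F)) * E := by
      rw [mul_assoc, ← mul_assoc (E^(n+1)) F E, ← mul_assoc]
    have h1 : (F^(n+1) * E^(n+1)) * (F * E) = F^(n+2)*E^(n+2)
        + (a * q^2) • (Kp * (F^(n+1) * E^(n+1)))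
        - (b * q⁻¹^2) • (Km * (F^(n+1) * E^(n+1))) := by
      rw [e1, EnF q E F Kp Km hKpE hKmE hEF n, ← ha, ← hb,
        mul_sub, mul_add, mul_smul_comm, mul_smul_comm, sub_mul, add_mul,
        smul_mul_assoc, smul_mul_assoc, t1, t2, t3, smul_smul, smul_smul]
    have cp : (q ^ (2*(n+1)+1) : RatFunc ℚ) = -(a * q^2 - q) := by
      have h := Sp q hq0 n; rw [← ha] at h; linear_combination h
    have cm : (q⁻¹ ^ (2*(n+1)+1) : RatFunc ℚ) = b * q⁻¹^2 + q⁻¹ := by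
      have h := Sm q hq0 n; rw [← hb] at h; linear_combination h
    rw [mul_sub, mul_sub, mul_smul_comm, mul_smul_comm, h1, ← hYKp, ← hYKm, cp, cm,
      neg_sub, sub_smul, add_smul]
    abel
end alg


end S9aux

/-- the recursion `X_t C = X_{t+1} - q^{-2t-1} K₋ X_t + (1 - q^{-2t}) K₋K₊ X_{t-1}`
for `t ≥ 1`, where `X_t = ∑_{s=0}^t (-1)^s q^s binom[q²]{t}{s} K₊^s F^{t-s} E^{t-s}` and
`C = FE - qK₊ - q⁻¹K₋`. -/
theorem statement9 {A : Type*} [Ring A] [Algebra (RatFunc ℚ) A]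
    (q : RatFunc ℚ) (hq : q = RatFunc.X)
    (E F Kp Km : A)
    (hK : Kp * Km = Km * Kp)
    (hKpE : Kp * E = (q ^ 2) • (E * Kp))
    (hKmE : Km * E = (q⁻¹ ^ 2) • (E * Km))
    (hKpF : Kp * F = (q⁻¹ ^ 2) • (F * Kp))
    (hKmF : Km * F = (q ^ 2) • (F * Km))
    (hEF : E * F - F * E = (q⁻¹ - q) • (Kp - Km))
    (C : A) (hC : C = F * E - q • Kp - q⁻¹ • Km)
    (X : ℕ → A)
    (hX : ∀ t : ℕ, X t = ∑ s ∈ Finset.range (t + 1),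
      (((-1 : RatFunc ℚ) ^ s * q ^ s * gbinom (q ^ 2) t s) •
        (Kp ^ s * F ^ (t - s) * E ^ (t - s))))
    (t : ℕ) (ht : 1 ≤ t) :
    X t * C = X (t + 1) - (q ^ (-(2 * (t : ℤ)) - 1)) • (Km * X t) +
      ((1 : RatFunc ℚ) - q ^ (-(2 * (t : ℤ)))) • (Km * Kp * X (t - 1)) := by
  have hq0 : q ≠ 0 := by rw [hq]; exact RatFunc.X_ne_zero
  have hv : ∀ k : ℕ, k ≠ 0 → (q ^ 2) ^ k - 1 ≠ 0 := by
    intro k hk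
    rw [hq, sub_ne_zero, ← pow_mul]
    rw [← RatFunc.algebraMap_X (K := ℚ), ← map_pow,
      ← map_one (algebraMap (Polynomial ℚ) (RatFunc ℚ))]
    intro h
    have h2 := RatFunc.algebraMap_injective ℚ h
    have h3 := congrArg Polynomial.natDegree h2
    simp only [Polynomial.natDegree_X_pow, Polynomial.natDegree_one] at h3
    omega
  obtain ⟨u, rfl⟩ : ∃ u, t = u + 1 := ⟨t - 1, by omega⟩
  have hzpow : ∀ n : ℕ, q ^ (-(n : ℤ)) = q⁻¹ ^ n := fun n => by
    rw [zpow_neg, zpow_natCast, inv_pow]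
  have hz1 : q ^ (-(2 * ((u + 1 : ℕ) : ℤ)) - 1) = q⁻¹ ^ (2 * (u + 1) + 1) := by
    rw [show (-(2 * ((u + 1 : ℕ) : ℤ)) - 1) = -(((2 * (u + 1) + 1 : ℕ) : ℤ)) by push_cast; ring]
    exact hzpow _
  have hz2 : q ^ (-(2 * ((u + 1 : ℕ) : ℤ))) = q⁻¹ ^ (2 * (u + 1)) := by
    rw [show (-(2 * ((u + 1 : ℕ) : ℤ))) = -(((2 * (u + 1) : ℕ) : ℤ)) by push_cast; ring]
    exact hzpow _
  rw [hz1, hz2, show u + 1 - 1 = u from rfl]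
  set al : ℕ → ℕ → RatFunc ℚ := fun a b =>
    (-1 : RatFunc ℚ) ^ b * q ^ b * gbinom (q ^ 2) a b with hal
  set G : ℕ → ℕ → A := fun s m => Kp ^ s * F ^ m * E ^ m with hG
  have hX' : ∀ m : ℕ, X m = ∑ s ∈ Finset.range (m + 1), al m s • G s (m - s) := by
    intro m; rw [hX m]
  have hGmul : ∀ s m : ℕ, G s m * C =
      G s (m + 1) - q ^ (2 * m + 1) • G (s + 1) m - q⁻¹ ^ (2 * m + 1) • (Km * G s m) := by
    intro s m
    have hcomm : Kp ^ s * Km = Km * Kp ^ s := (Commute.pow_left hK s).eq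
    simp only [hG]
    rw [hC, mul_assoc (Kp ^ s) (F ^ m) (E ^ m), mul_assoc (Kp ^ s),
      S9aux.YC q E F Kp Km hq0 hKpE hKmE hKpF hKmF hEF m,
      mul_sub, mul_sub, mul_smul_comm, mul_smul_comm,
      ← mul_assoc (Kp ^ s) Kp, ← pow_succ,
      ← mul_assoc (Kp ^ s) Km, hcomm, mul_assoc Km (Kp ^ s),
      ← mul_assoc (Kp ^ s) (F ^ (m + 1)), ← mul_assoc (Kp ^ (s + 1)) (F ^ m),
      ← mul_assoc (Kp ^ s) (F ^ m)]
  have step1 : X (u + 1) * C =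
      (∑ s ∈ Finset.range (u + 1 + 1), al (u + 1) s • G s (u + 2 - s))
      - (∑ s ∈ Finset.range (u + 1 + 1),
          (al (u + 1) s * q ^ (2 * (u + 1 - s) + 1)) • G (s + 1) (u + 1 - s))
      - (∑ s ∈ Finset.range (u + 1 + 1),
          (al (u + 1) s * q⁻¹ ^ (2 * (u + 1 - s) + 1)) • (Km * G s (u + 1 - s))) := by
    rw [hX' (u + 1), Finset.sum_mul, ← Finset.sum_sub_distrib, ← Finset.sum_sub_distrib]
    refine Finset.sum_congr rfl fun s hs => ?_
    have hsu : s ≤ u + 1 := by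
      have := Finset.mem_range.mp hs; omega
    rw [smul_mul_assoc, hGmul s (u + 1 - s), show u + 1 - s + 1 = u + 2 - s from by omega,
      smul_sub, smul_sub, smul_smul, smul_smul]
  have EqP : (∑ s ∈ Finset.range (u + 1 + 1), al (u + 1) s • G s (u + 2 - s))
      - (∑ s ∈ Finset.range (u + 1 + 1),
          (al (u + 1) s * q ^ (2 * (u + 1 - s) + 1)) • G (s + 1) (u + 1 - s))
      = X (u + 1 + 1) := by
    rw [hX' (u + 1 + 1)]
    rw [Finset.sum_range_succ' (fun s => al (u + 1 + 1) s • G s (u + 1 + 1 - s)) (u + 1 + 1),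
      Finset.sum_range_succ (fun s => al (u + 1 + 1) (s + 1) • G (s + 1) (u + 1 + 1 - (s + 1))) (u + 1),
      Finset.sum_range_succ' (fun s => al (u + 1) s • G s (u + 2 - s)) (u + 1),
      Finset.sum_range_succ (fun s =>
        (al (u + 1) s * q ^ (2 * (u + 1 - s) + 1)) • G (s + 1) (u + 1 - s)) (u + 1)]
    have hin : ∀ s ∈ Finset.range (u + 1),
        al (u + 1) (s + 1) • G (s + 1) (u + 2 - (s + 1))
          - (al (u + 1) s * q ^ (2 * (u + 1 - s) + 1)) • G (s + 1) (u + 1 - s)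
        = al (u + 1 + 1) (s + 1) • G (s + 1) (u + 1 + 1 - (s + 1)) := by
      intro s hs
      have hsu : s ≤ u := by have := Finset.mem_range.mp hs; omega
      rw [show u + 2 - (s + 1) = u + 1 - s from by omega, ← sub_smul]
      congr 1
      have hp := S9aux.alf_pascal q hv u s hsu
      simp only [S9aux.alf] at hp
      simp only [hal]
      linear_combination -hp
    have hsum := Finset.sum_congr rfl hin
    rw [Finset.sum_sub_distrib] at hsum
    have ca : al (u + 1) 0 • G 0 (u + 2 - 0) = al (u + 1 + 1) 0 • G 0 (u + 1 + 1 - 0) := by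
      simp [hal, S9aux.gbinom_zero]
    have cb : (al (u + 1) (u + 1) * q ^ (2 * (u + 1 - (u + 1)) + 1)) • G (u + 1 + 1) (u + 1 - (u + 1))
        = -(al (u + 1 + 1) (u + 1 + 1) • G (u + 1 + 1) (u + 1 + 1 - (u + 1 + 1))) := by
      rw [show u + 1 - (u + 1) = 0 from by omega, show u + 1 + 1 - (u + 1 + 1) = 0 from by omega,
        ← neg_smul]
      congr 1
      simp only [hal]
      rw [S9aux.gbinom_self (q ^ 2) hv, S9aux.gbinom_self (q ^ 2) hv,
        show 2 * 0 + 1 = 1 from rfl]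
      ring
    calc (∑ s ∈ Finset.range (u + 1), al (u + 1) (s + 1) • G (s + 1) (u + 2 - (s + 1)))
          + al (u + 1) 0 • G 0 (u + 2 - 0)
        - ((∑ s ∈ Finset.range (u + 1),
            (al (u + 1) s * q ^ (2 * (u + 1 - s) + 1)) • G (s + 1) (u + 1 - s))
          + (al (u + 1) (u + 1) * q ^ (2 * (u + 1 - (u + 1)) + 1)) • G (u + 1 + 1) (u + 1 - (u + 1)))
        = ((∑ s ∈ Finset.range (u + 1), al (u + 1) (s + 1) • G (s + 1) (u + 2 - (s + 1)))
            - (∑ s ∈ Finset.range (u + 1),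
              (al (u + 1) s * q ^ (2 * (u + 1 - s) + 1)) • G (s + 1) (u + 1 - s)))
          + al (u + 1) 0 • G 0 (u + 2 - 0)
          - (al (u + 1) (u + 1) * q ^ (2 * (u + 1 - (u + 1)) + 1)) • G (u + 1 + 1) (u + 1 - (u + 1)) := by
          abel
      _ = (∑ s ∈ Finset.range (u + 1), al (u + 1 + 1) (s + 1) • G (s + 1) (u + 1 + 1 - (s + 1)))
          + al (u + 1 + 1) (u + 1 + 1) • G (u + 1 + 1) (u + 1 + 1 - (u + 1 + 1))
          + al (u + 1 + 1) 0 • G 0 (u + 1 + 1 - 0) := by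
          rw [hsum, ca, cb]; abel
  have hR2 : q⁻¹ ^ (2 * (u + 1) + 1) • (Km * X (u + 1)) =
      ∑ s ∈ Finset.range (u + 1 + 1),
        (al (u + 1) s * q⁻¹ ^ (2 * (u + 1) + 1)) • (Km * G s (u + 1 - s)) := by
    rw [hX' (u + 1), Finset.mul_sum, Finset.smul_sum]
    refine Finset.sum_congr rfl fun s hs => ?_
    rw [mul_smul_comm, smul_smul, mul_comm]
  have hR3 : ((1 : RatFunc ℚ) - q⁻¹ ^ (2 * (u + 1))) • (Km * Kp * X u) =
      ∑ s ∈ Finset.range (u + 1),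
        (((1 : RatFunc ℚ) - q⁻¹ ^ (2 * (u + 1))) * al u s) • (Km * G (s + 1) (u - s)) := by
    rw [hX' u, Finset.mul_sum, Finset.smul_sum]
    refine Finset.sum_congr rfl fun s hs => ?_
    rw [mul_smul_comm, smul_smul]
    congr 1
    simp only [hG]
    rw [mul_assoc Km Kp, ← mul_assoc Kp (Kp ^ s * F ^ (u - s)) (E ^ (u - s)),
      ← mul_assoc Kp (Kp ^ s) (F ^ (u - s)), ← pow_succ']
  have EqM : (∑ s ∈ Finset.range (u + 1 + 1),
        (al (u + 1) s * q⁻¹ ^ (2 * (u + 1 - s) + 1)) • (Km * G s (u + 1 - s)))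
      = (∑ s ∈ Finset.range (u + 1 + 1),
          (al (u + 1) s * q⁻¹ ^ (2 * (u + 1) + 1)) • (Km * G s (u + 1 - s)))
        - (∑ s ∈ Finset.range (u + 1),
            (((1 : RatFunc ℚ) - q⁻¹ ^ (2 * (u + 1))) * al u s) • (Km * G (s + 1) (u - s))) := by
    rw [Finset.sum_range_succ' (fun s =>
        (al (u + 1) s * q⁻¹ ^ (2 * (u + 1 - s) + 1)) • (Km * G s (u + 1 - s))) (u + 1),
      Finset.sum_range_succ' (fun s =>
        (al (u + 1) s * q⁻¹ ^ (2 * (u + 1) + 1)) • (Km * G s (u + 1 - s))) (u + 1)]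
    have hin : ∀ s ∈ Finset.range (u + 1),
        (al (u + 1) (s + 1) * q⁻¹ ^ (2 * (u + 1 - (s + 1)) + 1)) • (Km * G (s + 1) (u + 1 - (s + 1)))
        = (al (u + 1) (s + 1) * q⁻¹ ^ (2 * (u + 1) + 1)) • (Km * G (s + 1) (u + 1 - (s + 1)))
          - (((1 : RatFunc ℚ) - q⁻¹ ^ (2 * (u + 1))) * al u s) • (Km * G (s + 1) (u - s)) := by
      intro s hs
      have hsu : s ≤ u := by have := Finset.mem_range.mp hs; omega
      rw [show u + 1 - (s + 1) = u - s from by omega, ← sub_smul]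
      congr 1
      have hp := S9aux.alf_absorb q hq0 hv u s hsu
      simp only [S9aux.alf] at hp
      simp only [hal]
      linear_combination hp
    have hsum := Finset.sum_congr rfl hin
    rw [Finset.sum_sub_distrib] at hsum
    rw [hsum, show u + 1 - 0 = u + 1 from by omega]
    abel
  rw [step1, EqP, EqM, hR2, hR3]
  abel
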